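/- (Lindström–Gessel–Viennot for upright paths, 3×3 case.) Let A₁=(−1,1), A₂=(0,0), A₃=(1,−1) and B₁=(i−1,j+1), B₂=(i,j), B₃=(i+1,j−1) with i,j ≥ 0. Any triple of pairwise non-intersecting upright lattice paths joining {A₁,A₂,A₃} to {B₁,B₂,B₃} must connect A_p to B_p for each p, and the number of such non-intersecting triples equals det(M), where M_{pq} is the number of upright lattice paths from A_p to B_q. -/

import Mathlib

/-- The set of lattice points visited by the upright path starting at `A`
with step word `w` (`false` = right step, `true` = up step). -/
def visited (A : ℤ × ℤ) (w : List Bool) : Set (ℤ × ℤ) :=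
  {p | ∃ t ≤ w.length,
    p = (A.1 + ((w.take t).count false : ℤ), A.2 + ((w.take t).count true : ℤ))}

/-- Endpoint of the upright path starting at `A` with step word `w`. -/
def endpoint (A : ℤ × ℤ) (w : List Bool) : ℤ × ℤ :=
  (A.1 + (w.count false : ℤ), A.2 + (w.count true : ℤ))

/-- Number of upright lattice paths from `A` to `B` (as an integer). -/
def pathNum (A B : ℤ × ℤ) : ℤ :=
  if 0 ≤ B.1 - A.1 ∧ 0 ≤ B.2 - A.2 then
    (Nat.choose ((B.1 - A.1) + (B.2 - A.2)).toNat (B.1 - A.1).toNat : ℤ)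
  else 0

namespace LGV3

/-! ### Basic step-counting functions -/

def F (w : List Bool) (t : ℕ) : ℕ := (w.take t).count false
def G (w : List Bool) (t : ℕ) : ℕ := (w.take t).count true

lemma count_add_count (l : List Bool) : l.count false + l.count true = l.length := by
  induction l with
  | nil => simp
  | cons a l ih => cases a <;> simp [List.count_cons] <;> omega

lemma F_add_G (w : List Bool) {t : ℕ} (h : t ≤ w.length) : F w t + G w t = t := by
  have := count_add_count (w.take t)
  simpa [F, G, List.length_take, Nat.min_eq_left h] using this

lemma F_zero (w : List Bool) : F w 0 = 0 := by simp [F]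

lemma F_length (w : List Bool) : F w (w.length) = w.count false := by simp [F]

lemma F_succ_le (w : List Bool) (t : ℕ) : F w (t+1) ≤ F w t + 1 := by
  have h1 : (w[t]?.toList).count false ≤ 1 := by
    cases h : w[t]? with
    | none => simp
    | some b => cases b <;> simp [List.count_cons]
  simp only [F, List.take_succ, List.count_append]
  omega

lemma F_le_succ (w : List Bool) (t : ℕ) : F w t ≤ F w (t+1) := by
  simp only [F, List.take_succ, List.count_append]
  omega

lemma F_le_count (w : List Bool) (t : ℕ) : F w t ≤ w.count false :=
  List.Sublist.count_le false (List.take_sublist t w)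

lemma F_count_drop (w : List Bool) (t : ℕ) :
    F w t + (w.drop t).count false = w.count false := by
  conv_rhs => rw [← List.take_append_drop t w]
  rw [List.count_append]; rfl

lemma G_count_drop (w : List Bool) (t : ℕ) :
    G w t + (w.drop t).count true = w.count true := by
  conv_rhs => rw [← List.take_append_drop t w]
  rw [List.count_append]; rfl

/-- discrete IVT -/
lemma ivt (d : ℕ → ℤ) (n : ℕ) (hstep : ∀ t, d (t+1) ≤ d t + 1)
    (h0 : d 0 ≤ 0) (hn : 0 ≤ d n) : ∃ t ≤ n, d t = 0 := by
  have hex : ∃ t, 0 ≤ d t := ⟨n, hn⟩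
  classical
  let t0 := Nat.find hex
  have ht0 : 0 ≤ d t0 := Nat.find_spec hex
  have ht0n : t0 ≤ n := Nat.find_min' hex hn
  refine ⟨t0, ht0n, ?_⟩
  match h : t0, ht0, ht0n with
  | 0, ht0, _ => omega
  | (s+1), ht0, _ =>
    have hs : ¬ 0 ≤ d s := Nat.find_min hex (by omega)
    have := hstep s
    omega

/-! ### Counting words with a given number of `false`s -/

def allW (n : ℕ) : Finset (List Bool) := (Finset.univ : Finset (Fin n → Bool)).image List.ofFn

lemma mem_allW {n : ℕ} {l : List Bool} : l ∈ allW n ↔ l.length = n := by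
  simp only [allW, Finset.mem_image, Finset.mem_univ, true_and]
  constructor
  · rintro ⟨f, rfl⟩; simp
  · rintro rfl; exact ⟨l.get, List.ofFn_get l⟩

lemma count_ofFn {n : ℕ} (f : Fin n → Bool) :
    (List.ofFn f).count false = (Finset.univ.filter (fun x => f x = false)).card := by
  induction n with
  | zero => simp
  | succ n ih =>
    rw [List.ofFn_succ, Finset.card_filter, Fin.sum_univ_succ, ← Finset.card_filter]
    have ihs := ih (fun i => f i.succ)
    cases h : f 0 <;> simp [List.count_cons, h, ihs]
    omega

lemma card_filter_count (n c : ℕ) :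
    ((allW n).filter (fun l => l.count false = c)).card = n.choose c := by
  classical
  rw [allW, Finset.filter_image]
  rw [Finset.card_image_of_injective _ List.ofFn_injective]
  have key : ∀ f : Fin n → Bool, (List.ofFn f).count false = c ↔
      (Finset.univ.filter (fun x => f x = false)) ∈ Finset.powersetCard c (Finset.univ : Finset (Fin n)) := by
    intro f
    rw [count_ofFn, Finset.mem_powersetCard]
    exact ⟨fun h => ⟨Finset.filter_subset _ _, h⟩, fun h => h.2⟩
  have hc : n.choose c = (Finset.powersetCard c (Finset.univ : Finset (Fin n))).card := by
    rw [Finset.card_powersetCard, Finset.card_univ, Fintype.card_fin]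
  rw [hc]
  apply Finset.card_bij (fun f _ => Finset.univ.filter (fun x => f x = false))
  · intro f hf; exact (key f).mp (by simpa using hf)
  · intro f hf g hg h
    funext x
    have := Finset.ext_iff.mp h x
    simp only [Finset.mem_filter, Finset.mem_univ, true_and] at this
    cases hfx : f x <;> cases hgx : g x <;> simp [hfx, hgx] at this ⊢
  · intro s hs
    refine ⟨fun x => !(decide (x ∈ s)), ?_, ?_⟩
    · simp only [Finset.mem_filter, Finset.mem_univ, true_and]
      rw [key]
      have : (Finset.univ.filter (fun x => (!(decide (x ∈ s))) = false)) = s := by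
        ext x; by_cases hx : x ∈ s <;> simp [hx]
      rw [this]; exact hs
    · ext x
      simp only [Finset.mem_filter, Finset.mem_univ, true_and, Bool.not_eq_true']
      by_cases hx : x ∈ s <;> simp [hx]

/-! ### The specific start and end points -/

def Av : Fin 3 → ℤ × ℤ := ![((-1 : ℤ), (1 : ℤ)), ((0 : ℤ), (0 : ℤ)), ((1 : ℤ), (-1 : ℤ))]
def Bv (i j : ℕ) : Fin 3 → ℤ × ℤ :=
  ![((i : ℤ) - 1, (j : ℤ) + 1), ((i : ℤ), (j : ℤ)), ((i : ℤ) + 1, (j : ℤ) - 1)]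

lemma Av1 (p : Fin 3) : (Av p).1 = (p.val : ℤ) - 1 := by fin_cases p <;> simp [Av]
lemma Av2 (p : Fin 3) : (Av p).2 = 1 - (p.val : ℤ) := by fin_cases p <;> simp [Av]
lemma AvSum (p : Fin 3) : (Av p).1 + (Av p).2 = 0 := by rw [Av1, Av2]; ring
lemma Bv1 (i j : ℕ) (q : Fin 3) : (Bv i j q).1 = (i : ℤ) + (q.val : ℤ) - 1 := by
  fin_cases q <;> simp [Bv] <;> ring
lemma Bv2 (i j : ℕ) (q : Fin 3) : (Bv i j q).2 = (j : ℤ) + 1 - (q.val : ℤ) := by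
  fin_cases q <;> simp [Bv] <;> ring

lemma endpoint_iff {i j : ℕ} {p q : Fin 3} {w : List Bool} :
    endpoint (Av p) w = Bv i j q ↔
      (w.count false : ℤ) = (i : ℤ) + q.val - p.val ∧
      (w.count true : ℤ) = (j : ℤ) + p.val - q.val := by
  rw [endpoint, Prod.ext_iff]
  simp only [Av1, Av2, Bv1, Bv2]
  constructor <;> intro h <;> exact ⟨by omega, by omega⟩

lemma length_of_endpoint {i j : ℕ} {p q : Fin 3} {w : List Bool}
    (h : endpoint (Av p) w = Bv i j q) : w.length = i + j := by
  obtain ⟨h1, h2⟩ := endpoint_iff.mp h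
  have h3 := count_add_count w
  have : (w.length : ℤ) = (i : ℤ) + j := by
    rw [← h3]; push_cast; omega
  exact_mod_cast this

/-! ### Path systems -/

def ends (i j : ℕ) (σ : Equiv.Perm (Fin 3)) (w : Fin 3 → List Bool) : Prop :=
  ∀ p, endpoint (Av p) (w p) = Bv i j (σ p)

instance (i j : ℕ) (σ : Equiv.Perm (Fin 3)) : DecidablePred (ends i j σ) := fun w => by
  unfold ends; infer_instance

def Pm (w : Fin 3 → List Bool) (t : ℕ) : Prop :=
  ∃ p q : Fin 3, p ≠ q ∧ F (w p) t + p.val = F (w q) t + q.val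

def meets (i j : ℕ) (w : Fin 3 → List Bool) : Prop := ∃ t ≤ i + j, Pm w t

lemma lengths_of_ends {i j : ℕ} {σ : Equiv.Perm (Fin 3)} {w : Fin 3 → List Bool}
    (h : ends i j σ w) (p : Fin 3) : (w p).length = i + j :=
  length_of_endpoint (h p)

/-- key geometric reduction -/
lemma inter_nonempty_iff {A A' : ℤ × ℤ} (hA : A.1 + A.2 = 0) (hA' : A'.1 + A'.2 = 0)
    (u v : List Bool) :
    (visited A u ∩ visited A' v).Nonempty ↔
      ∃ t, t ≤ u.length ∧ t ≤ v.length ∧ A.1 + (F u t : ℤ) = A'.1 + (F v t : ℤ) := by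
  constructor
  · rintro ⟨P, ⟨s, hs, rfl⟩, t, ht, hPt⟩
    have hx := congrArg Prod.fst hPt
    have hy := congrArg Prod.snd hPt
    simp only at hx hy
    have hgu : (F u s : ℤ) + (G u s : ℤ) = s := by exact_mod_cast F_add_G u hs
    have hgv : (F v t : ℤ) + (G v t : ℤ) = t := by exact_mod_cast F_add_G v ht
    rw [show ((u.take s).count false : ℤ) = (F u s : ℤ) from rfl] at hx
    rw [show ((v.take t).count false : ℤ) = (F v t : ℤ) from rfl] at hx
    rw [show ((u.take s).count true : ℤ) = (G u s : ℤ) from rfl] at hy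
    rw [show ((v.take t).count true : ℤ) = (G v t : ℤ) from rfl] at hy
    have hst : s = t := by omega
    subst hst
    exact ⟨s, hs, ht, by omega⟩
  · rintro ⟨t, htu, htv, hx⟩
    refine ⟨(A.1 + (F u t : ℤ), A.2 + (G u t : ℤ)), ⟨t, htu, rfl⟩, ⟨t, htv, ?_⟩⟩
    have hgu : (F u t : ℤ) + (G u t : ℤ) = t := by exact_mod_cast F_add_G u htu
    have hgv : (F v t : ℤ) + (G v t : ℤ) = t := by exact_mod_cast F_add_G v htv
    have hy : A.2 + (G u t : ℤ) = A'.2 + (G v t : ℤ) := by omega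
    rw [show ((v.take t).count false : ℤ) = (F v t : ℤ) from rfl,
        show ((v.take t).count true : ℤ) = (G v t : ℤ) from rfl]
    rw [hx, hy]

lemma meets_iff_visited {i j : ℕ} {w : Fin 3 → List Bool}
    (hlen : ∀ p, (w p).length = i + j) :
    meets i j w ↔ ∃ p q : Fin 3, p ≠ q ∧
      (visited (Av p) (w p) ∩ visited (Av q) (w q)).Nonempty := by
  constructor
  · rintro ⟨t, ht, p, q, hpq, hF⟩
    refine ⟨p, q, hpq, (inter_nonempty_iff (AvSum p) (AvSum q) _ _).mpr
      ⟨t, by rw [hlen p]; exact ht, by rw [hlen q]; exact ht, ?_⟩⟩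
    rw [Av1, Av1]
    have : (F (w p) t : ℤ) + p.val = (F (w q) t : ℤ) + q.val := by exact_mod_cast hF
    omega
  · rintro ⟨p, q, hpq, hne⟩
    obtain ⟨t, ht1, ht2, hx⟩ := (inter_nonempty_iff (AvSum p) (AvSum q) _ _).mp hne
    rw [Av1, Av1] at hx
    refine ⟨t, by rw [← hlen p]; exact ht1, p, q, hpq, ?_⟩
    have : (F (w p) t : ℤ) + p.val = (F (w q) t : ℤ) + q.val := by omega
    exact_mod_cast this

lemma disjoint_iff_not_meets {i j : ℕ} {w : Fin 3 → List Bool}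
    (hlen : ∀ p, (w p).length = i + j) :
    (∀ p q : Fin 3, p ≠ q → visited (Av p) (w p) ∩ visited (Av q) (w q) = ∅) ↔
      ¬ meets i j w := by
  rw [meets_iff_visited hlen]
  push_neg
  constructor
  · intro h p q hpq
    exact h p q hpq
  · intro h p q hpq
    exact h p q hpq

/-! ### Non-intersecting systems force the identity permutation -/

lemma perm_of_mono : ∀ σ : Equiv.Perm (Fin 3), (∀ p q : Fin 3, p < q → σ p < σ q) → σ = 1 := by
  decide

lemma sigma_eq_one {i j : ℕ} {σ : Equiv.Perm (Fin 3)} {w : Fin 3 → List Bool}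
    (hends : ends i j σ w) (hnm : ¬ meets i j w) : σ = 1 := by
  have key : ∀ p q : Fin 3, p < q → σ p < σ q := by
    intro p q hpq
    by_contra hlt
    push_neg at hlt
    have hne : σ p ≠ σ q := fun h => absurd (σ.injective h) (ne_of_lt hpq)
    have hgt : σ q < σ p := lt_of_le_of_ne hlt (Ne.symm hne)
    -- apply IVT to d
    set d : ℕ → ℤ := fun t => ((F (w p) t : ℤ) + p.val) - ((F (w q) t : ℤ) + q.val) with hd
    have hstep : ∀ t, d (t+1) ≤ d t + 1 := by
      intro t
      have h1 := F_succ_le (w p) t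
      have h2 := F_le_succ (w q) t
      simp only [hd]
      have h1' : (F (w p) (t+1) : ℤ) ≤ (F (w p) t : ℤ) + 1 := by exact_mod_cast h1
      have h2' : (F (w q) t : ℤ) ≤ (F (w q) (t+1) : ℤ) := by exact_mod_cast h2
      omega
    have h0 : d 0 ≤ 0 := by
      simp only [hd, F_zero]
      have : (p.val : ℤ) < q.val := by exact_mod_cast hpq
      omega
    have hn : 0 ≤ d (i + j) := by
      have hcp := (endpoint_iff.mp (hends p)).1
      have hcq := (endpoint_iff.mp (hends q)).1
      have hlp := lengths_of_ends hends p
      have hlq := lengths_of_ends hends q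
      have e1 : F (w p) (i+j) = (w p).count false := by rw [← hlp, F_length]
      have e2 : F (w q) (i+j) = (w q).count false := by rw [← hlq, F_length]
      have hv : ((σ q).val : ℤ) < ((σ p).val : ℤ) := by exact_mod_cast hgt
      simp only [hd, e1, e2]
      omega
    obtain ⟨t, htn, ht0⟩ := ivt d (i+j) hstep h0 hn
    apply hnm
    refine ⟨t, htn, p, q, ne_of_lt hpq, ?_⟩
    simp only [hd] at ht0
    omega
  exact perm_of_mono σ key

/-! ### Finset of path systems, and the count-to-pathNum identification -/

def sys (i j : ℕ) : Finset (Fin 3 → List Bool) := Fintype.piFinset (fun _ => allW (i+j))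

lemma mem_sys {i j : ℕ} {w : Fin 3 → List Bool} :
    w ∈ sys i j ↔ ∀ p, (w p).length = i + j := by
  simp [sys, Fintype.mem_piFinset, mem_allW]

lemma card_one_path (i j : ℕ) (p q : Fin 3) :
    (((allW (i+j)).filter (fun l => endpoint (Av p) l = Bv i j q)).card : ℤ) =
      pathNum (Av p) (Bv i j q) := by
  classical
  have hB1 : (Bv i j q).1 - (Av p).1 = (i : ℤ) + q.val - p.val := by
    rw [Av1, Bv1]; ring
  have hB2 : (Bv i j q).2 - (Av p).2 = (j : ℤ) + p.val - q.val := by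
    rw [Av2, Bv2]; ring
  by_cases hc : 0 ≤ (i : ℤ) + q.val - p.val ∧ 0 ≤ (j : ℤ) + p.val - q.val
  · rw [pathNum, if_pos (by rw [hB1, hB2]; exact hc)]
    rw [hB1, hB2]
    have hsum : (((i : ℤ) + q.val - p.val) + ((j : ℤ) + p.val - q.val)).toNat = i + j := by
      rw [show ((i : ℤ) + q.val - p.val) + ((j : ℤ) + p.val - q.val) = ((i + j : ℕ) : ℤ) by
        push_cast; ring]
      exact Int.toNat_natCast _
    rw [hsum]
    set c : ℕ := ((i : ℤ) + q.val - p.val).toNat with hcdef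
    have hcc : ((i : ℤ) + q.val - p.val) = (c : ℤ) := (Int.toNat_of_nonneg hc.1).symm
    have : ((allW (i+j)).filter (fun l => endpoint (Av p) l = Bv i j q)) =
        ((allW (i+j)).filter (fun l => l.count false = c)) := by
      ext l
      simp only [Finset.mem_filter, mem_allW]
      constructor
      · rintro ⟨hl, he⟩
        obtain ⟨h1, _⟩ := endpoint_iff.mp he
        exact ⟨hl, by omega⟩
      · rintro ⟨hl, he⟩
        refine ⟨hl, endpoint_iff.mpr ⟨by omega, ?_⟩⟩
        have hll : (l.count false : ℤ) + (l.count true : ℤ) = (i : ℤ) + j := by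
          have h3 := count_add_count l
          have h4 : ((l.count false + l.count true : ℕ) : ℤ) = ((i + j : ℕ) : ℤ) := by
            rw [h3, hl]
          push_cast at h4; omega
        omega
    rw [this, card_filter_count]
  · rw [pathNum, if_neg (by rw [hB1, hB2]; exact hc)]
    have : ((allW (i+j)).filter (fun l => endpoint (Av p) l = Bv i j q)) = ∅ := by
      ext l
      simp only [Finset.mem_filter, mem_allW, Finset.notMem_empty, iff_false, not_and]
      intro hl he
      obtain ⟨h1, h2⟩ := endpoint_iff.mp he
      apply hc
      constructor
      · rw [← h1]; positivity
      · rw [← h2]; positivity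
    rw [this]
    simp

lemma card_ends (i j : ℕ) (σ : Equiv.Perm (Fin 3)) :
    (((sys i j).filter (ends i j σ)).card : ℤ) =
      ∏ p : Fin 3, pathNum (Av p) (Bv i j (σ p)) := by
  classical
  have : (sys i j).filter (ends i j σ) =
      Fintype.piFinset (fun p => (allW (i+j)).filter (fun l => endpoint (Av p) l = Bv i j (σ p))) := by
    ext w
    simp only [sys, Finset.mem_filter, Fintype.mem_piFinset, ends]
    exact ⟨fun h p => ⟨h.1 p, h.2 p⟩, fun h => ⟨fun p => (h p).1, fun p => (h p).2⟩⟩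
  rw [this, Fintype.card_piFinset]
  push_cast
  exact Finset.prod_congr rfl (fun p _ => card_one_path i j p (σ p))

/-! ### The tail-swapping involution -/

instance (w : Fin 3 → List Bool) (t : ℕ) : Decidable (Pm w t) := by
  unfold Pm; infer_instance

instance (i j : ℕ) (w : Fin 3 → List Bool) : Decidable (meets i j w) := by
  unfold meets; infer_instance

def swapW (w : Fin 3 → List Bool) (t : ℕ) (p q : Fin 3) : Fin 3 → List Bool :=
  fun r => if r = p then (w p).take t ++ (w q).drop t
    else if r = q then (w q).take t ++ (w p).drop t else w r

lemma swapW_p (w : Fin 3 → List Bool) (t : ℕ) (p q : Fin 3) :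
    swapW w t p q p = (w p).take t ++ (w q).drop t := by simp [swapW]

lemma swapW_q (w : Fin 3 → List Bool) (t : ℕ) {p q : Fin 3} (hpq : p ≠ q) :
    swapW w t p q q = (w q).take t ++ (w p).drop t := by
  simp [swapW, Ne.symm hpq]

lemma swapW_r (w : Fin 3 → List Bool) (t : ℕ) {p q r : Fin 3} (hrp : r ≠ p) (hrq : r ≠ q) :
    swapW w t p q r = w r := by simp [swapW, hrp, hrq]

lemma F_append_take {a : List Bool} (b : List Bool) {s t : ℕ} (hs : s ≤ t)
    (ht : t ≤ a.length) : F (a.take t ++ b) s = F a s := by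
  unfold F
  rw [List.take_append_of_le_length (by rw [List.length_take]; omega), List.take_take,
    Nat.min_eq_left hs]

lemma F_swapW {w : Fin 3 → List Bool} {t : ℕ} {p q : Fin 3} (hlp : t ≤ (w p).length)
    (hlq : t ≤ (w q).length) {s : ℕ} (hs : s ≤ t) (r : Fin 3) :
    F (swapW w t p q r) s = F (w r) s := by
  rcases eq_or_ne r p with rfl | hrp
  · rw [swapW_p]; exact F_append_take _ hs hlp
  · rcases eq_or_ne r q with rfl | hrq
    · rcases eq_or_ne p r with rfl | hpr
      · rw [swapW_p]; exact F_append_take _ hs hlp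
      · rw [swapW_q _ _ hpr]; exact F_append_take _ hs hlq
    · rw [swapW_r _ _ hrp hrq]

lemma count_false_glue (a b : List Bool) (t : ℕ) :
    ((a.take t ++ b.drop t).count false : ℤ) = (F a t : ℤ) + b.count false - F b t := by
  rw [List.count_append]
  have h : (F b t : ℤ) + ((b.drop t).count false : ℤ) = b.count false := by
    exact_mod_cast F_count_drop b t
  have h2 : ((a.take t).count false : ℤ) = F a t := rfl
  push_cast
  omega

lemma count_true_glue (a b : List Bool) (t : ℕ) :
    ((a.take t ++ b.drop t).count true : ℤ) = (G a t : ℤ) + b.count true - G b t := by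
  rw [List.count_append]
  have h : (G b t : ℤ) + ((b.drop t).count true : ℤ) = b.count true := by
    exact_mod_cast G_count_drop b t
  have h2 : ((a.take t).count true : ℤ) = G a t := rfl
  push_cast
  omega

lemma glue_endpoint {i j : ℕ} {p q c d : Fin 3} {u v : List Bool} {t : ℕ}
    (hu : endpoint (Av p) u = Bv i j c) (hv : endpoint (Av q) v = Bv i j d)
    (hlu : t ≤ u.length) (hlv : t ≤ v.length)
    (hF : F u t + p.val = F v t + q.val) :
    endpoint (Av p) (u.take t ++ v.drop t) = Bv i j d := by
  obtain ⟨hv1, hv2⟩ := endpoint_iff.mp hv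
  have hFi : (F u t : ℤ) + p.val = (F v t : ℤ) + q.val := by exact_mod_cast hF
  have hgu : (F u t : ℤ) + G u t = t := by exact_mod_cast F_add_G u hlu
  have hgv : (F v t : ℤ) + G v t = t := by exact_mod_cast F_add_G v hlv
  rw [endpoint_iff]
  constructor
  · rw [count_false_glue]; omega
  · rw [count_true_glue]; omega

lemma ends_swap {i j : ℕ} {σ : Equiv.Perm (Fin 3)} {w : Fin 3 → List Bool}
    (hends : ends i j σ w) {t : ℕ} (ht : t ≤ i + j) {p q : Fin 3} (hpq : p ≠ q)
    (hF : F (w p) t + p.val = F (w q) t + q.val) :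
    ends i j (σ * Equiv.swap p q) (swapW w t p q) := by
  have hlp : t ≤ (w p).length := by rw [lengths_of_ends hends p]; exact ht
  have hlq : t ≤ (w q).length := by rw [lengths_of_ends hends q]; exact ht
  intro r
  rcases eq_or_ne r p with rfl | hrp
  · rw [swapW_p, show (σ * Equiv.swap r q) r = σ q by
      simp [Equiv.Perm.mul_apply, Equiv.swap_apply_left]]
    exact glue_endpoint (hends r) (hends q) hlp hlq hF
  · rcases eq_or_ne r q with rfl | hrq
    · rw [swapW_q _ _ hpq, show (σ * Equiv.swap p r) r = σ p by
        simp [Equiv.Perm.mul_apply, Equiv.swap_apply_right]]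
      exact glue_endpoint (hends r) (hends p) hlq hlp hF.symm
    · rw [swapW_r _ _ hrp hrq, show (σ * Equiv.swap p q) r = σ r by
        simp [Equiv.Perm.mul_apply, Equiv.swap_apply_of_ne_of_ne hrp hrq]]
      exact hends r

lemma swapW_swapW {w : Fin 3 → List Bool} {t : ℕ} {p q : Fin 3} (hpq : p ≠ q)
    (hlp : t ≤ (w p).length) (hlq : t ≤ (w q).length) :
    swapW (swapW w t p q) t p q = w := by
  have hlenp : ((w p).take t).length = t := by rw [List.length_take]; omega
  have hlenq : ((w q).take t).length = t := by rw [List.length_take]; omega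
  funext r
  rcases eq_or_ne r p with rfl | hrp
  · rw [swapW_p, swapW_p, swapW_q _ _ hpq, List.take_left' hlenp, List.drop_left' hlenq,
      List.take_append_drop]
  · rcases eq_or_ne r q with rfl | hrq
    · rw [swapW_q _ _ hpq, swapW_p, swapW_q _ _ hpq, List.take_left' hlenq,
        List.drop_left' hlenp, List.take_append_drop]
    · rw [swapW_r _ _ hrp hrq, swapW_r _ _ hrp hrq]

/-! ### Choosing the first crossing -/

def pick (v : Fin 3 → ℕ) : Fin 3 × Fin 3 :=
  if v 0 = v 1 then (0, 1) else if v 0 = v 2 then (0, 2) else (1, 2)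

lemma pick_spec {v : Fin 3 → ℕ} (h : ∃ p q : Fin 3, p ≠ q ∧ v p = v q) :
    (pick v).1 ≠ (pick v).2 ∧ v (pick v).1 = v (pick v).2 := by
  unfold pick
  split_ifs with h1 h2
  · exact ⟨by decide, h1⟩
  · exact ⟨by decide, h2⟩
  · refine ⟨by decide, ?_⟩
    obtain ⟨p, q, hpq, hv⟩ := h
    fin_cases p <;> fin_cases q <;> simp_all

/-! ### The involution -/

def tmin {w : Fin 3 → List Bool} (hex : ∃ t, Pm w t) : ℕ := Nat.find hex

def pr (w : Fin 3 → List Bool) (t : ℕ) : Fin 3 × Fin 3 :=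
  pick (fun r => F (w r) t + r.val)

def crossEx {i j : ℕ} {w : Fin 3 → List Bool} (hm : meets i j w) : ∃ t, Pm w t :=
  let ⟨t, _, h⟩ := hm; ⟨t, h⟩

def Phi (i j : ℕ) (x : Equiv.Perm (Fin 3) × (Fin 3 → List Bool)) (hm : meets i j x.2) :
    Equiv.Perm (Fin 3) × (Fin 3 → List Bool) :=
  (x.1 * Equiv.swap (pr x.2 (tmin (crossEx hm))).1 (pr x.2 (tmin (crossEx hm))).2,
    swapW x.2 (tmin (crossEx hm)) (pr x.2 (tmin (crossEx hm))).1 (pr x.2 (tmin (crossEx hm))).2)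

lemma pr_spec {w : Fin 3 → List Bool} {t : ℕ} (h : Pm w t) :
    (pr w t).1 ≠ (pr w t).2 ∧
      F (w (pr w t).1) t + (pr w t).1.val = F (w (pr w t).2) t + (pr w t).2.val :=
  pick_spec h

theorem Phi_props {i j : ℕ} (x : Equiv.Perm (Fin 3) × (Fin 3 → List Bool))
    (he : ends i j x.1 x.2) (hm : meets i j x.2) :
    ends i j (Phi i j x hm).1 (Phi i j x hm).2 ∧ meets i j (Phi i j x hm).2 ∧
    Equiv.Perm.sign (Phi i j x hm).1 = - Equiv.Perm.sign x.1 ∧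
    (Phi i j x hm).1 ≠ x.1 ∧
    ∀ hm', Phi i j (Phi i j x hm) hm' = x := by
  obtain ⟨σ, w⟩ := x
  simp only at he hm ⊢
  have hex : ∃ t, Pm w t := crossEx hm
  set t := tmin hex with htdef
  have hPm : Pm w t := Nat.find_spec hex
  have hmin : ∀ s < t, ¬ Pm w s := fun s hs => Nat.find_min hex hs
  obtain ⟨hpq, hF⟩ := pr_spec hPm
  set p := (pr w t).1 with hp
  set q := (pr w t).2 with hq
  have htn : t ≤ i + j := by
    obtain ⟨s, hs, hPs⟩ := hm
    exact le_trans (Nat.find_min' hex hPs) hs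
  have hlp : t ≤ (w p).length := by rw [lengths_of_ends he p]; exact htn
  have hlq : t ≤ (w q).length := by rw [lengths_of_ends he q]; exact htn
  have hPhi : Phi i j (σ, w) hm = (σ * Equiv.swap p q, swapW w t p q) := rfl
  have hends' : ends i j (σ * Equiv.swap p q) (swapW w t p q) := ends_swap he htn hpq hF
  have hFpres : ∀ s ≤ t, ∀ r, F (swapW w t p q r) s = F (w r) s :=
    fun s hs r => F_swapW hlp hlq hs r
  have hPmiff : ∀ s ≤ t, (Pm (swapW w t p q) s ↔ Pm w s) := by
    intro s hs
    unfold Pm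
    constructor
    · rintro ⟨a, b, hab, hFe⟩
      exact ⟨a, b, hab, by rwa [hFpres s hs a, hFpres s hs b] at hFe⟩
    · rintro ⟨a, b, hab, hFe⟩
      exact ⟨a, b, hab, by rwa [hFpres s hs a, hFpres s hs b]⟩
  have hmeets' : meets i j (swapW w t p q) := ⟨t, htn, (hPmiff t le_rfl).mpr hPm⟩
  rw [hPhi]
  refine ⟨hends', hmeets', ?_, ?_, ?_⟩
  · simp [Equiv.Perm.sign_mul, Equiv.Perm.sign_swap hpq]
  · simp only
    intro h
    have h2 : σ * Equiv.swap p q = σ * 1 := by rw [h, mul_one]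
    have h3 : Equiv.swap p q = 1 := mul_left_cancel h2
    have h4 := Equiv.swap_apply_left p q
    rw [h3] at h4
    simp at h4
    exact hpq h4
  · intro hm'
    have hex' : ∃ s, Pm (swapW w t p q) s := crossEx hm'
    have ht' : tmin hex' = t := by
      apply le_antisymm
      · exact Nat.find_min' hex' ((hPmiff t le_rfl).mpr hPm)
      · rw [tmin, Nat.le_find_iff]
        intro m hmt
        rw [hPmiff m (le_of_lt hmt)]
        exact hmin m hmt
    have hpr' : pr (swapW w t p q) (tmin hex') = (p, q) := by
      rw [ht', pr]
      have : (fun r => F (swapW w t p q r) t + r.val) = (fun r => F (w r) t + r.val) := by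
        funext r; rw [hFpres t le_rfl r]
      rw [this]
      rw [hp, hq, pr]
    have key : Phi i j (σ * Equiv.swap p q, swapW w t p q) hm' =
        ((σ * Equiv.swap p q) *
            Equiv.swap (pr (swapW w t p q) (tmin hex')).1 (pr (swapW w t p q) (tmin hex')).2,
          swapW (swapW w t p q) (tmin hex') (pr (swapW w t p q) (tmin hex')).1
            (pr (swapW w t p q) (tmin hex')).2) := rfl
    rw [key, hpr', ht']
    simp only
    rw [mul_assoc, Equiv.swap_mul_self, mul_one, swapW_swapW hpq hlp hlq]

/-! ### Signed sums -/

lemma sum_sign_meets (i j : ℕ) :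
    (∑ x ∈ ((Finset.univ : Finset (Equiv.Perm (Fin 3))) ×ˢ sys i j).filter
        (fun x => ends i j x.1 x.2 ∧ meets i j x.2),
      ((Equiv.Perm.sign x.1 : ℤˣ) : ℤ)) = 0 := by
  classical
  refine Finset.sum_involution
    (fun x hx => Phi i j x (Finset.mem_filter.mp hx).2.2) ?_ ?_ ?_ ?_
  · intro x hx
    obtain ⟨_, _, hsign, _, _⟩ := Phi_props x (Finset.mem_filter.mp hx).2.1
      (Finset.mem_filter.mp hx).2.2
    rw [hsign]
    simp
  · intro x hx _
    obtain ⟨_, _, _, hne, _⟩ := Phi_props x (Finset.mem_filter.mp hx).2.1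
      (Finset.mem_filter.mp hx).2.2
    intro hcon
    exact hne (congrArg Prod.fst hcon)
  · intro x hx
    obtain ⟨he', hm', _, _, _⟩ := Phi_props x (Finset.mem_filter.mp hx).2.1
      (Finset.mem_filter.mp hx).2.2
    refine Finset.mem_filter.mpr ⟨?_, he', hm'⟩
    exact Finset.mem_product.mpr ⟨Finset.mem_univ _, mem_sys.mpr (lengths_of_ends he')⟩
  · intro x hx
    obtain ⟨_, _, _, _, hinv⟩ := Phi_props x (Finset.mem_filter.mp hx).2.1
      (Finset.mem_filter.mp hx).2.2
    exact hinv _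

lemma det_eq (i j : ℕ) :
    Matrix.det (Matrix.of fun p q : Fin 3 => pathNum (Av p) (Bv i j q)) =
      ∑ σ : Equiv.Perm (Fin 3),
        ((Equiv.Perm.sign σ : ℤˣ) : ℤ) * ∏ p, pathNum (Av p) (Bv i j (σ p)) := by
  rw [Matrix.det_apply']
  rw [← Equiv.sum_comp (Equiv.inv (Equiv.Perm (Fin 3)))
    (fun σ => ((Equiv.Perm.sign σ : ℤˣ) : ℤ) * ∏ p, pathNum (Av p) (Bv i j (σ p)))]
  apply Finset.sum_congr rfl
  intro σ _
  simp only [Equiv.inv_apply, Equiv.Perm.sign_inv]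
  congr 1
  have h2 := Equiv.prod_comp σ⁻¹ (fun r => pathNum (Av (σ r)) (Bv i j r))
  simp only [← Equiv.Perm.mul_apply, mul_inv_cancel, Equiv.Perm.one_apply] at h2
  rw [show (∏ r, Matrix.of (fun p q : Fin 3 => pathNum (Av p) (Bv i j q)) (σ r) r) =
    ∏ r, pathNum (Av (σ r)) (Bv i j r) from rfl]
  exact h2.symm

lemma main_count (i j : ℕ) :
    (((sys i j).filter (fun w => ends i j 1 w ∧ ¬ meets i j w)).card : ℤ) =
      Matrix.det (Matrix.of fun p q : Fin 3 => pathNum (Av p) (Bv i j q)) := by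
  classical
  rw [det_eq]
  have hsplit : ∀ σ : Equiv.Perm (Fin 3),
      ((Equiv.Perm.sign σ : ℤˣ) : ℤ) * ∏ p, pathNum (Av p) (Bv i j (σ p)) =
        ((Equiv.Perm.sign σ : ℤˣ) : ℤ) *
          (((sys i j).filter (fun w => ends i j σ w ∧ ¬ meets i j w)).card : ℤ) +
        ((Equiv.Perm.sign σ : ℤˣ) : ℤ) *
          (((sys i j).filter (fun w => ends i j σ w ∧ meets i j w)).card : ℤ) := by
    intro σ
    rw [← card_ends]
    have : ((sys i j).filter (ends i j σ)).card =
        ((sys i j).filter (fun w => ends i j σ w ∧ ¬ meets i j w)).card +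
        ((sys i j).filter (fun w => ends i j σ w ∧ meets i j w)).card := by
      rw [← Finset.filter_filter, ← Finset.filter_filter, add_comm]
      exact (Finset.card_filter_add_card_filter_not (p := meets i j)).symm
    rw [this]
    push_cast
    ring
  rw [Finset.sum_congr rfl (fun σ _ => hsplit σ), Finset.sum_add_distrib]
  have hX : (∑ σ : Equiv.Perm (Fin 3), ((Equiv.Perm.sign σ : ℤˣ) : ℤ) *
      (((sys i j).filter (fun w => ends i j σ w ∧ meets i j w)).card : ℤ)) = 0 := by
    rw [← sum_sign_meets i j]
    rw [Finset.sum_filter, Finset.sum_product]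
    apply Finset.sum_congr rfl
    intro σ _
    rw [Finset.card_filter]
    push_cast
    rw [Finset.mul_sum]
    apply Finset.sum_congr rfl
    intro w _
    rw [mul_ite, mul_one, mul_zero]
  have hNI : (∑ σ : Equiv.Perm (Fin 3), ((Equiv.Perm.sign σ : ℤˣ) : ℤ) *
      (((sys i j).filter (fun w => ends i j σ w ∧ ¬ meets i j w)).card : ℤ)) =
      (((sys i j).filter (fun w => ends i j 1 w ∧ ¬ meets i j w)).card : ℤ) := by
    rw [Finset.sum_eq_single 1]
    · simp
    · intro σ _ hσ
      have : ((sys i j).filter (fun w => ends i j σ w ∧ ¬ meets i j w)) = ∅ := by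
        ext w
        simp only [Finset.mem_filter, Finset.notMem_empty, iff_false, not_and]
        intro _ he hnm
        exact hσ (sigma_eq_one he hnm)
      rw [this]
      simp
    · intro h
      exact absurd (Finset.mem_univ 1) h
  rw [hX, hNI, add_zero]

end LGV3


/-- Lindström–Gessel–Viennot in the `3 × 3` case for the points
`A₁=(-1,1), A₂=(0,0), A₃=(1,-1)` and `B₁=(i-1,j+1), B₂=(i,j), B₃=(i+1,j-1)`:
any pairwise non-intersecting triple joining the `A`'s to the `B`'s connects
`A_p` to `B_p` for each `p`, and the number of such triples is `det M` where
`M p q` counts upright paths from `A_p` to `B_q`. -/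
theorem lgv_three_by_three (i j : ℕ) :
    let A : Fin 3 → ℤ × ℤ := ![((-1 : ℤ), (1 : ℤ)), ((0 : ℤ), (0 : ℤ)), ((1 : ℤ), (-1 : ℤ))]
    let B : Fin 3 → ℤ × ℤ :=
      ![((i : ℤ) - 1, (j : ℤ) + 1), ((i : ℤ), (j : ℤ)), ((i : ℤ) + 1, (j : ℤ) - 1)]
    (∀ w : Fin 3 → List Bool,
        (∃ σ : Equiv.Perm (Fin 3), ∀ p, endpoint (A p) (w p) = B (σ p)) →
        (∀ p q, p ≠ q → visited (A p) (w p) ∩ visited (A q) (w q) = ∅) →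
        ∀ p, endpoint (A p) (w p) = B p) ∧
      ({w : Fin 3 → List Bool |
          (∀ p, endpoint (A p) (w p) = B p) ∧
          (∀ p q, p ≠ q → visited (A p) (w p) ∩ visited (A q) (w q) = ∅)}.ncard : ℤ) =
        Matrix.det (Matrix.of fun p q : Fin 3 => pathNum (A p) (B q)) := by
  intro A B
  constructor
  · rintro w ⟨σ, hσ⟩ hdisj p
    have he : LGV3.ends i j σ w := fun r => hσ r
    have hlen := LGV3.lengths_of_ends he
    have hnm : ¬ LGV3.meets i j w :=
      (LGV3.disjoint_iff_not_meets hlen).mp (fun a b hab => hdisj a b hab)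
    have hone := LGV3.sigma_eq_one he hnm
    have := hσ p
    rw [hone] at this
    simpa using this
  · have hset : {w : Fin 3 → List Bool |
          (∀ p, endpoint (A p) (w p) = B p) ∧
          (∀ p q, p ≠ q → visited (A p) (w p) ∩ visited (A q) (w q) = ∅)} =
        ↑((LGV3.sys i j).filter (fun w => LGV3.ends i j 1 w ∧ ¬ LGV3.meets i j w)) := by
      ext w
      simp only [Set.mem_setOf_eq, Finset.mem_coe, Finset.mem_filter]
      constructor
      · rintro ⟨hend, hdisj⟩
        have he : LGV3.ends i j 1 w := fun p => by
          rw [show ((1 : Equiv.Perm (Fin 3)) p) = p from rfl]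
          exact hend p
        have hlen := LGV3.lengths_of_ends he
        exact ⟨LGV3.mem_sys.mpr hlen, he,
          (LGV3.disjoint_iff_not_meets hlen).mp (fun a b hab => hdisj a b hab)⟩
      · rintro ⟨hmem, he, hnm⟩
        have hlen := LGV3.lengths_of_ends he
        refine ⟨fun p => ?_, fun a b hab => (LGV3.disjoint_iff_not_meets hlen).mpr hnm a b hab⟩
        have := he p
        rw [show ((1 : Equiv.Perm (Fin 3)) p) = p from rfl] at this
        exact this
    rw [hset, Set.ncard_coe_finset]
    exact LGV3.main_count i j
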